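/- Every self-full co-ceer-resistant ceer is hereditarily self-full: if X is a self-full ceer such that for every Π⁰₁ equivalence relation C with infinitely many classes there exist x, y with x X y and ¬(x C y), then for every self-full ceer Y, the uniform join X ⊕ Y is self-full. -/

import Mathlib

set_option maxHeartbeats 1000000

/-- `f` is a computable reduction from `R` to `S`. -/
def CReduction (f : ℕ → ℕ) (R S : ℕ → ℕ → Prop) : Prop :=
  Computable f ∧ ∀ x y, R x y ↔ S (f x) (f y)

/-- `R` is computably reducible to `S`. -/
def Reduces (R S : ℕ → ℕ → Prop) : Prop := ∃ f, CReduction f R S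

/-- A ceer: a computably enumerable equivalence relation on ℕ. -/
def Ceer (R : ℕ → ℕ → Prop) : Prop :=
  Equivalence R ∧ REPred fun p : ℕ × ℕ => R p.1 p.2

/-- `R` is self-full: every computable self-reduction has range meeting every class. -/
def SelfFull (R : ℕ → ℕ → Prop) : Prop :=
  ∀ f, CReduction f R R → ∀ y, ∃ x, R (f x) y

/-- Uniform join `R ⊕ S`: evens code `R`, odds code `S`. -/
def join (R S : ℕ → ℕ → Prop) : ℕ → ℕ → Prop :=
  fun a b => (∃ x y, a = 2*x ∧ b = 2*y ∧ R x y) ∨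
             (∃ x y, a = 2*x+1 ∧ b = 2*y+1 ∧ S x y)

/-- A Π⁰₁ relation: the complement is c.e. -/
def Pi01 (C : ℕ → ℕ → Prop) : Prop :=
  REPred fun p : ℕ × ℕ => ¬ C p.1 p.2

/-- `R` has infinitely many equivalence classes. -/
def InfiniteClasses (R : ℕ → ℕ → Prop) : Prop :=
  ∀ l : List ℕ, ∃ x, ∀ y ∈ l, ¬ R x y

/-- `R` has only finitely many equivalence classes. -/
def FiniteClasses (R : ℕ → ℕ → Prop) : Prop :=
  ∃ l : List ℕ, ∀ x, ∃ y ∈ l, R x y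

/-- `X` is co-ceer-resistant. -/
def CoCeerResistant (X : ℕ → ℕ → Prop) : Prop :=
  ∀ C : ℕ → ℕ → Prop, Equivalence C → Pi01 C → InfiniteClasses C →
    ∃ x y, X x y ∧ ¬ C x y

/-- `X` is hereditarily self-full. -/
def HSF (X : ℕ → ℕ → Prop) : Prop :=
  ∀ Y, Ceer Y → SelfFull Y → SelfFull (join X Y)

/-- `IdN n` is a ceer with exactly `n + 1` classes; so `IdN (n-1)` plays the role of `Idₙ` for `n ≥ 1`. -/
def IdN (n : ℕ) : ℕ → ℕ → Prop := fun x y => min x n = min y n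

/-- A universal ceer: every ceer reduces to it. -/
def Universal (U : ℕ → ℕ → Prop) : Prop := ∀ R, Ceer R → Reduces R U

/-- The Π⁰₁ equivalence relation `∼ᶠ` induced by a self-reduction `f` of a uniform join. -/
def simF (f : ℕ → ℕ) : ℕ → ℕ → Prop :=
  fun n m => ∀ k, (Even (f^[k] (2*n)) ↔ Even (f^[k] (2*m)))

/-- A sequence is eventually periodic. -/
def EventuallyPeriodic (τ : ℕ → Bool) : Prop :=
  ∃ N p, 0 < p ∧ ∀ k, N ≤ k → τ (k + p) = τ k

section CeerAux

variable {X Y : ℕ → ℕ → Prop} {f : ℕ → ℕ}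

lemma join_even_iff {x y : ℕ} : join X Y (2*x) (2*y) ↔ X x y := by
  constructor
  · rintro (⟨a, b, ha, hb, h⟩ | ⟨a, b, ha, hb, h⟩)
    · obtain rfl : x = a := by omega
      obtain rfl : y = b := by omega
      exact h
    · omega
  · intro h; exact Or.inl ⟨x, y, rfl, rfl, h⟩

lemma join_odd_iff {x y : ℕ} : join X Y (2*x+1) (2*y+1) ↔ Y x y := by
  constructor
  · rintro (⟨a, b, ha, hb, h⟩ | ⟨a, b, ha, hb, h⟩)
    · omega
    · obtain rfl : x = a := by omega
      obtain rfl : y = b := by omega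
      exact h
  · intro h; exact Or.inr ⟨x, y, rfl, rfl, h⟩

lemma join_mod {a b : ℕ} (h : join X Y a b) : a % 2 = b % 2 := by
  rcases h with ⟨x, y, rfl, rfl, -⟩ | ⟨x, y, rfl, rfl, -⟩ <;> omega

lemma red_iter (hr : ∀ a b, join X Y a b ↔ join X Y (f a) (f b)) :
    ∀ (j : ℕ) (a b : ℕ), join X Y a b ↔ join X Y (f^[j] a) (f^[j] b) := by
  intro j
  induction j with
  | zero => simp
  | succ j ih =>
    intro a b
    rw [Function.iterate_succ_apply', Function.iterate_succ_apply']
    exact (ih a b).trans (hr _ _)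

lemma simF_equiv' : Equivalence (simF f) :=
  ⟨fun _ _ => Iff.rfl, fun h k => (h k).symm, fun h1 h2 k => (h1 k).trans (h2 k)⟩

lemma X_sub_simF (hr : ∀ a b, join X Y a b ↔ join X Y (f a) (f b))
    {n m : ℕ} (h : X n m) : simF f n m := by
  intro k
  have hj := (red_iter hr k _ _).1 (join_even_iff.2 h)
  rw [Nat.even_iff, Nat.even_iff, join_mod hj]

lemma computable_iterate (hf : Computable f) (Q : ℕ) : Computable (f^[Q]) := by
  induction Q with
  | zero => simpa using Computable.id
  | succ Q ih =>
    rw [Function.iterate_succ']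
    exact hf.comp ih

lemma computable_iter2' (hf : Computable f) :
    Computable fun p : ℕ × ℕ => f^[p.2] p.1 := by
  have h : Computable fun p : ℕ × ℕ =>
      Nat.rec (motive := fun _ => ℕ) p.1 (fun y IH => f IH) p.2 :=
    Computable.nat_rec Computable.snd Computable.fst
      ((hf.comp (Computable.snd.comp Computable.snd)).to₂)
  refine h.of_eq fun p => ?_
  obtain ⟨a, n⟩ := p
  induction n with
  | zero => rfl
  | succ n ih => simpa [Function.iterate_succ_apply'] using congrArg f ih

lemma computable_decide_eq {α : Type} [Primcodable α] {u v : α → ℕ} (hu : Computable u)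
    (hv : Computable v) : Computable fun a => decide (u a = v a) :=
  (Primrec.eq.decide.to_comp : Computable₂ fun a b : ℕ => decide (a = b)).comp hu hv

lemma compPred_mod {u : ℕ → ℕ} (hu : Computable u) :
    ComputablePred fun n => u n % 2 = 0 := by
  refine ComputablePred.computable_iff.2 ⟨fun n => decide (u n % 2 = 0), ?_, ?_⟩
  · exact computable_decide_eq
      ((Primrec.nat_mod.to_comp).comp hu (Computable.const 2)) (Computable.const 0)
  · funext n
    simp

lemma simF_pi01 (hf : Computable f) : Pi01 (simF f) := by
  have hdc : Computable₂ fun (p : ℕ × ℕ) (k : ℕ) =>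
      !(decide (f^[k] (2*p.1) % 2 = f^[k] (2*p.2) % 2)) := by
    have hp1 : Computable fun q : (ℕ × ℕ) × ℕ => ((2*q.1.1, q.2) : ℕ × ℕ) :=
      Computable.pair
        ((Primrec.nat_mul.to_comp).comp (Computable.const 2) (Computable.fst.comp Computable.fst))
        Computable.snd
    have hp2 : Computable fun q : (ℕ × ℕ) × ℕ => ((2*q.1.2, q.2) : ℕ × ℕ) :=
      Computable.pair
        ((Primrec.nat_mul.to_comp).comp (Computable.const 2) (Computable.snd.comp Computable.fst))
        Computable.snd
    have h1' : Computable fun q : (ℕ × ℕ) × ℕ => f^[q.2] (2*q.1.1) :=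
      (computable_iter2' hf).comp hp1
    have h2' : Computable fun q : (ℕ × ℕ) × ℕ => f^[q.2] (2*q.1.2) :=
      (computable_iter2' hf).comp hp2
    have h1 : Computable fun q : (ℕ × ℕ) × ℕ => f^[q.2] (2*q.1.1) % 2 :=
      (Primrec.nat_mod.to_comp).comp h1' (Computable.const 2)
    have h2 : Computable fun q : (ℕ × ℕ) × ℕ => f^[q.2] (2*q.1.2) % 2 :=
      (Primrec.nat_mod.to_comp).comp h2' (Computable.const 2)
    have h3 : Computable fun q : (ℕ × ℕ) × ℕ =>
        decide (f^[q.2] (2*q.1.1) % 2 = f^[q.2] (2*q.1.2) % 2) :=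
      computable_decide_eq h1 h2
    exact (Primrec.dom_bool Bool.not).to_comp.comp h3
  have hpart : Partrec fun p : ℕ × ℕ => Nat.rfind fun k =>
      ((!(decide (f^[k] (2*p.1) % 2 = f^[k] (2*p.2) % 2))) : Part Bool) :=
    Partrec.rfind hdc.partrec₂
  refine (hpart.dom_re).of_eq fun p => ?_
  erw [Nat.rfind_dom]
  constructor
  · rintro ⟨k, hk, -⟩ hsim
    have h := hsim k
    rw [Nat.even_iff, Nat.even_iff] at h
    simp at hk
    omega
  · intro hns
    simp only [simF, not_forall] at hns
    obtain ⟨k, hk⟩ := hns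
    refine ⟨k, ?_, fun _ => trivial⟩
    rw [Nat.even_iff, Nat.even_iff] at hk
    have hne : f^[k] (2*p.1) % 2 ≠ f^[k] (2*p.2) % 2 := by omega
    simp [hne]

lemma per_mul {σ : ℕ → Prop} {N p : ℕ} (h : ∀ k, N ≤ k → (σ (k+p) ↔ σ k)) :
    ∀ c k, N ≤ k → (σ (k + c*p) ↔ σ k) := by
  intro c
  induction c with
  | zero => simp
  | succ c ih =>
    intro k hk
    have he : k + (c+1)*p = (k + c*p) + p := by ring
    rw [he, h _ (by omega)]
    exact ih k hk

lemma ev_per {l : List ℕ} (hcov : ∀ a, ∃ y ∈ l, simF f a y) (n : ℕ) :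
    ∃ N p, 0 < p ∧ ∀ k, N ≤ k → (Even (f^[k+p] (2*n)) ↔ Even (f^[k] (2*n))) := by
  by_cases hb : ∀ K, ∃ k, K ≤ k ∧ Even (f^[k] (2*n))
  · choose F hF1 hF2 using hb
    set e : ℕ → ℕ := fun i => Nat.rec (F 0) (fun _ prev => F (prev+1)) i with he
    have heEven : ∀ i, Even (f^[e i] (2*n)) := by
      intro i; cases i <;> exact hF2 _
    have hmono : ∀ i, e i < e (i+1) := fun i =>
      lt_of_lt_of_le (Nat.lt_succ_self _) (hF1 (e i + 1))
    have hsm : StrictMono e := strictMono_nat_of_lt_succ hmono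
    set m : ℕ → ℕ := fun i => f^[e i] (2*n) / 2 with hm
    have h2m : ∀ i, 2 * (m i) = f^[e i] (2*n) := by
      intro i
      have h := heEven i
      rw [Nat.even_iff] at h
      simp only [hm]
      omega
    choose y hy1 hy2 using hcov
    obtain ⟨i, hi, j, hj, hne, heq⟩ :=
      Finset.exists_ne_map_eq_of_card_lt_of_maps_to
        (s := Finset.range (l.length + 1)) (t := l.toFinset)
        (f := fun i => y (m i))
        (by simpa using Nat.lt_succ_of_le l.toFinset_card_le)
        (fun i _ => List.mem_toFinset.2 (hy1 (m i)))
    obtain ⟨i, j, hij, heq⟩ : ∃ i j, i < j ∧ y (m i) = y (m j) := by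
      rcases hne.lt_or_gt with h | h
      · exact ⟨i, j, h, heq⟩
      · exact ⟨j, i, h, heq.symm⟩
    have hsimij : simF f (m i) (m j) :=
      simF_equiv'.trans (hy2 (m i)) (heq ▸ simF_equiv'.symm (hy2 (m j)))
    have hej : e i < e j := hsm hij
    refine ⟨e i, e j - e i, by omega, ?_⟩
    intro k hk
    have hq := hsimij (k - e i)
    rw [h2m i, h2m j, ← Function.iterate_add_apply, ← Function.iterate_add_apply] at hq
    have e1 : k - e i + e i = k := by omega
    have e2 : k - e i + e j = k + (e j - e i) := by omega
    rw [e1, e2] at hq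
    exact hq.symm
  · push_neg at hb
    obtain ⟨K, hK⟩ := hb
    exact ⟨K, 1, one_pos, fun k hk =>
      iff_of_false (hK _ (by omega)) (hK _ hk)⟩

lemma uniform_step {l : List ℕ} (hcov : ∀ a, ∃ y ∈ l, simF f a y) :
    ∃ Q, 1 ≤ Q ∧ ∀ n, (Even (f^[Q] (2*n)) ↔ Even (f^[Q+Q] (2*n))) := by
  have hper := ev_per hcov
  choose N P hPpos hper using hper
  set K := (l.map N).sum with hKdef
  set Pr := (l.map P).prod with hPrdef
  have hKy : ∀ y ∈ l, N y ≤ K := fun y hy =>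
    List.single_le_sum (fun _ _ => Nat.zero_le _) _ (List.mem_map_of_mem (f := N) hy)
  have hPy : ∀ y ∈ l, P y ∣ Pr := fun y hy => List.dvd_prod (List.mem_map_of_mem (f := P) hy)
  have hPrpos : 0 < Pr := List.prod_pos (by
    rintro x hx
    rw [List.mem_map] at hx
    obtain ⟨y, hy, rfl⟩ := hx
    exact hPpos y)
  have hper2 : ∀ n k, K ≤ k → (Even (f^[k + Pr] (2*n)) ↔ Even (f^[k] (2*n))) := by
    intro n k hk
    obtain ⟨y, hyl, hsim⟩ := hcov n
    obtain ⟨c, hc⟩ := hPy y hyl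
    have hpy : ∀ k', N y ≤ k' → (Even (f^[k'+ P y] (2*n)) ↔ Even (f^[k'] (2*n))) := by
      intro k' hk'
      exact ((hsim (k' + P y)).trans (hper y k' hk')).trans (hsim k').symm
    have hmul := per_mul (σ := fun k => Even (f^[k] (2*n))) hpy c k (le_trans (hKy y hyl) hk)
    rwa [show c * P y = Pr from by rw [hc]; ring] at hmul
  set Q := Pr * (K+1) with hQdef
  have hQ1 : 1 ≤ Q := Nat.succ_le_of_lt (Nat.mul_pos hPrpos (Nat.succ_pos K))
  refine ⟨Q, hQ1, fun n => ?_⟩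
  have hKQ : K ≤ Q := by
    have := Nat.le_mul_of_pos_left (K+1) hPrpos
    omega
  have hmul := per_mul (σ := fun k => Even (f^[k] (2*n))) (N := K) (p := Pr)
    (fun k hk => hper2 n k hk) (K+1) Q hKQ
  rw [show Q + (K+1) * Pr = Q + Q from by rw [hQdef]; ring] at hmul
  exact hmul.symm

end CeerAux

/-- Every self-full co-ceer-resistant ceer is hereditarily self-full. -/
theorem stmt5 (X : ℕ → ℕ → Prop) (hX : Ceer X) (hsf : SelfFull X)
    (hccr : CoCeerResistant X) :
    ∀ Y : ℕ → ℕ → Prop, Ceer Y → SelfFull Y → SelfFull (join X Y) := by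
  intro Y hY hsfY f0 hf0 b
  obtain ⟨hfc, hfr⟩ := hf0
  -- Step 1: `simF f0` has finitely many classes, by co-ceer-resistance.
  have hfin : ∃ l : List ℕ, ∀ a, ∃ y ∈ l, simF f0 a y := by
    by_contra hcon
    push_neg at hcon
    obtain ⟨x, y, hxy, hnsim⟩ := hccr (simF f0) simF_equiv' (simF_pi01 hfc) hcon
    exact hnsim (X_sub_simF hfr hxy)
  obtain ⟨l, hcov⟩ := hfin
  -- Step 2: extract a uniform iterate `Q` after which parities of even trajectories stabilize.
  obtain ⟨Q, hQ1, hkey⟩ := uniform_step hcov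
  obtain ⟨g, hg⟩ : ∃ g' : ℕ → ℕ, g' = f0^[Q] := ⟨_, rfl⟩
  have hgc : Computable g := by rw [hg]; exact computable_iterate hfc Q
  have hgr : ∀ a b, join X Y a b ↔ join X Y (g a) (g b) := by
    rw [hg]; exact red_iter hfr Q
  have hgg : ∀ a, g (g a) = f0^[Q+Q] a := by
    rw [hg]; exact fun a => (Function.iterate_add_apply f0 Q Q a).symm
  have key2 : ∀ n, g (2*n) % 2 = g (g (2*n)) % 2 := by
    intro n
    have h1 := hkey n
    rw [← hg, ← hgg (2*n)] at h1
    rw [Nat.even_iff, Nat.even_iff] at h1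
    omega
  have hwit : ∀ (a b' j : ℕ), 1 ≤ j → join X Y (f0^[j] a) b' → ∃ x, join X Y (f0 x) b' := by
    intro a b' j hj h
    obtain ⟨j', rfl⟩ : ∃ j', j = j' + 1 := ⟨j - 1, by omega⟩
    rw [Function.iterate_succ_apply'] at h
    exact ⟨f0^[j'] a, h⟩
  -- Step 3: the even-side self-reduction `r` of `X`.
  obtain ⟨r, hrdef⟩ : ∃ r' : ℕ → ℕ,
      r' = fun n => if g (2*n) % 2 = 0 then g (2*n) / 2 else n := ⟨_, rfl⟩
  have hrE : ∀ n, g (2*n) % 2 = 0 → r n = g (2*n) / 2 := by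
    intro n hn; rw [hrdef]; simp [hn]
  have hrO : ∀ n, ¬ (g (2*n) % 2 = 0) → r n = n := by
    intro n hn; rw [hrdef]; simp [hn]
  have hrC : Computable r := by
    rw [hrdef]
    exact ComputablePred.ite
      ((Primrec.nat_div.to_comp).comp
        (hgc.comp ((Primrec.nat_mul.to_comp).comp (Computable.const 2) Computable.id))
        (Computable.const 2))
      Computable.id
      (compPred_mod (hgc.comp ((Primrec.nat_mul.to_comp).comp (Computable.const 2) Computable.id)))
  have hrred : ∀ n m, X n m ↔ X (r n) (r m) := by
    intro n m
    by_cases hn : g (2*n) % 2 = 0 <;> by_cases hm : g (2*m) % 2 = 0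
    · rw [hrE n hn, hrE m hm]
      have e1 : 2 * (g (2*n) / 2) = g (2*n) := by omega
      have e2 : 2 * (g (2*m) / 2) = g (2*m) := by omega
      constructor
      · intro h
        have hj := (hgr _ _).1 (join_even_iff.2 h)
        rw [← e1, ← e2] at hj
        exact join_even_iff.1 hj
      · intro h
        have hj : join X Y (2*(g (2*n)/2)) (2*(g (2*m)/2)) := join_even_iff.2 h
        rw [e1, e2] at hj
        exact join_even_iff.1 ((hgr _ _).2 hj)
    · rw [hrE n hn, hrO m hm]
      have e1 : 2 * (g (2*n) / 2) = g (2*n) := by omega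
      constructor
      · intro h
        have hp := join_mod ((hgr _ _).1 (join_even_iff.2 h))
        omega
      · intro h
        exfalso
        have hj := (hgr _ _).1 (join_even_iff.2 h)
        rw [e1] at hj
        have hp := join_mod hj
        have hk := key2 n
        omega
    · rw [hrO n hn, hrE m hm]
      have e2 : 2 * (g (2*m) / 2) = g (2*m) := by omega
      constructor
      · intro h
        have hp := join_mod ((hgr _ _).1 (join_even_iff.2 h))
        omega
      · intro h
        exfalso
        have hj := (hgr _ _).1 (join_even_iff.2 h)
        rw [e2] at hj
        have hp := join_mod hj
        have hk := key2 m
        omega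
    · rw [hrO n hn, hrO m hm]
  -- Step 4: every even class whose trajectory stays even is in the range of `g`.
  have hAcov : ∀ t, g (2*t) % 2 = 0 → ∃ x, join X Y (g (2*x)) (2*t) ∧ g (2*x) % 2 = 0 := by
    intro t ht
    obtain ⟨x, hx⟩ := hsf r ⟨hrC, hrred⟩ t
    by_cases hxe : g (2*x) % 2 = 0
    · rw [hrE x hxe] at hx
      have e1 : 2 * (g (2*x) / 2) = g (2*x) := by omega
      refine ⟨x, ?_, hxe⟩
      have hj : join X Y (2*(g (2*x)/2)) (2*t) := join_even_iff.2 hx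
      rwa [e1] at hj
    · exfalso
      rw [hrO x hxe] at hx
      have hp := join_mod ((hgr _ _).1 (join_even_iff.2 hx))
      omega
  -- Step 5: images of odd numbers that are even must have odd-side trajectories.
  have h9a : ∀ m, g (2*m+1) % 2 = 0 → ¬ (g (g (2*m+1)) % 2 = 0) := by
    intro m hm hcon
    have e1 : 2 * (g (2*m+1) / 2) = g (2*m+1) := by omega
    have hcon' : g (2 * (g (2*m+1) / 2)) % 2 = 0 := by rw [e1]; exact hcon
    obtain ⟨x, hx, -⟩ := hAcov (g (2*m+1) / 2) hcon'
    rw [e1] at hx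
    have hp := join_mod ((hgr _ _).2 hx)
    omega
  -- Step 6: the odd-side self-reduction `s` of `Y`.
  obtain ⟨h, hhdef⟩ : ∃ h' : ℕ → ℕ,
      h' = fun m => if g (2*m+1) % 2 = 0 then g (g (2*m+1)) else g (2*m+1) := ⟨_, rfl⟩
  have hhE : ∀ m, g (2*m+1) % 2 = 0 → h m = g (g (2*m+1)) := by
    intro m hm; rw [hhdef]; simp [hm]
  have hhO : ∀ m, ¬ (g (2*m+1) % 2 = 0) → h m = g (2*m+1) := by
    intro m hm; rw [hhdef]; simp [hm]
  have hodd : ∀ m, h m % 2 = 1 := by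
    intro m
    by_cases hm : g (2*m+1) % 2 = 0
    · have h1 := hhE m hm
      have h2 := h9a m hm
      omega
    · have h1 := hhO m hm
      omega
  obtain ⟨s, hsdef⟩ : ∃ s' : ℕ → ℕ, s' = fun m => h m / 2 := ⟨_, rfl⟩
  have hs2 : ∀ m, 2 * s m + 1 = h m := by
    intro m
    have := hodd m
    rw [hsdef]
    simp only []
    omega
  have hhC : Computable h := by
    have c21 : Computable fun m : ℕ => 2*m+1 :=
      Computable.succ.comp ((Primrec.nat_mul.to_comp).comp (Computable.const 2) Computable.id)
    rw [hhdef]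
    exact ComputablePred.ite (hgc.comp (hgc.comp c21)) (hgc.comp c21)
      (compPred_mod (hgc.comp c21))
  have hsC : Computable s := by
    rw [hsdef]
    exact (Primrec.nat_div.to_comp).comp hhC (Computable.const 2)
  have hsred : ∀ m m', Y m m' ↔ Y (s m) (s m') := by
    intro m m'
    have hYJ : Y m m' ↔ join X Y (g (2*m+1)) (g (2*m'+1)) :=
      (join_odd_iff.symm).trans (hgr _ _)
    have hsJ : Y (s m) (s m') ↔ join X Y (h m) (h m') := by
      rw [← hs2, ← hs2]
      exact join_odd_iff.symm
    rw [hYJ, hsJ]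
    by_cases hm : g (2*m+1) % 2 = 0 <;> by_cases hm' : g (2*m'+1) % 2 = 0
    · rw [hhE m hm, hhE m' hm']
      exact hgr _ _
    · rw [hhE m hm, hhO m' hm']
      constructor
      · intro hj
        have hp := join_mod hj
        omega
      · intro hj
        exfalso
        have hp := join_mod ((hgr _ _).2 hj)
        omega
    · rw [hhO m hm, hhE m' hm']
      constructor
      · intro hj
        have hp := join_mod hj
        omega
      · intro hj
        exfalso
        have hp := join_mod ((hgr _ _).2 hj)
        omega
    · rw [hhO m hm, hhO m' hm']
  -- Step 7: every odd class is in the range of `h`.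
  have hOcov : ∀ t, ∃ m, join X Y (h m) (2*t+1) := by
    intro t
    obtain ⟨m, hm⟩ := hsfY s ⟨hsC, hsred⟩ t
    refine ⟨m, ?_⟩
    have hj : join X Y (2 * s m + 1) (2*t+1) := join_odd_iff.2 hm
    rwa [hs2] at hj
  -- Step 8: conclude, by cases on the parity of the target `b`.
  rcases Nat.even_or_odd b with hb | hb
  · obtain ⟨t, rfl⟩ := hb
    rw [show t + t = 2*t from by ring]
    by_cases ht : g (2*t) % 2 = 0
    · obtain ⟨x, hx, -⟩ := hAcov t ht
      rw [hg] at hx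
      exact hwit (2*x) (2*t) Q hQ1 hx
    · have hw : 2 * (g (2*t) / 2) + 1 = g (2*t) := by omega
      obtain ⟨m, hm⟩ := hOcov (g (2*t) / 2)
      rw [hw] at hm
      by_cases hme : g (2*m+1) % 2 = 0
      · rw [hhE m hme] at hm
        have hj := (hgr _ _).2 hm
        rw [hg] at hj
        exact hwit (2*m+1) (2*t) Q hQ1 hj
      · exfalso
        rw [hhO m hme] at hm
        have hp := join_mod ((hgr _ _).2 hm)
        omega
  · obtain ⟨t, rfl⟩ := hb
    obtain ⟨m, hm⟩ := hOcov t
    by_cases hme : g (2*m+1) % 2 = 0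
    · rw [hhE m hme, hgg] at hm
      exact hwit (2*m+1) (2*t+1) (Q+Q) (by omega) hm
    · rw [hhO m hme, hg] at hm
      exact hwit (2*m+1) (2*t+1) Q hQ1 hm
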